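/- For every eigenvalue λ of the random unitary operation Φ with |λ| = 1, the eigenspace Ker(Φ − λ·id) is orthogonal to the range Ran(Φ − λ·id) with respect to the Hilbert–Schmidt inner product: for every K with Φ(K) = λ·K and every Y, one has Tr(K†·(Φ(Y) − λ·Y)) = 0. -/

import Mathlib

open Matrix BigOperators

namespace Stmt6Aux

variable {d : ℕ}

noncomputable def g : Matrix (Fin d) (Fin d) ℂ →ₗ[ℂ] EuclideanSpace ℂ (Fin d × Fin d) where
  toFun A := (WithLp.equiv 2 _).symm (fun ij => A ij.1 ij.2)
  map_add' A B := by ext ij; simp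
  map_smul' c A := by ext ij; simp

lemma g_apply (A : Matrix (Fin d) (Fin d) ℂ) (ij : Fin d × Fin d) :
    g A ij = A ij.1 ij.2 := rfl

lemma g_inj : Function.Injective (g (d := d)) := by
  intro A B h
  ext i j
  have := congrArg (fun v => v (i, j)) h
  simpa [g_apply] using this

lemma inner_g (A B : Matrix (Fin d) (Fin d) ℂ) :
    (inner ℂ (g A) (g B) : ℂ) = (Aᴴ * B).trace := by
  simp only [PiLp.inner_apply, RCLike.inner_apply, g_apply, Matrix.trace,
    Matrix.diag, Matrix.mul_apply, Matrix.conjTranspose_apply, Fintype.sum_prod_type]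
  rw [Finset.sum_comm]
  simp [mul_comm]

lemma norm_g_sq (A : Matrix (Fin d) (Fin d) ℂ) :
    (‖g A‖ : ℂ) ^ 2 = (Aᴴ * A).trace := by
  rw [← inner_g]
  exact (inner_self_eq_norm_sq_to_K (𝕜 := ℂ) (g A)).symm

end Stmt6Aux

open Stmt6Aux

theorem stmt_6 {d m : ℕ} (hd : 1 ≤ d)
    (U : Fin m → Matrix (Fin d) (Fin d) ℂ)
    (hU : ∀ i, U i ∈ Matrix.unitaryGroup (Fin d) ℂ)
    (p : Fin m → ℝ) (hp : ∀ i, 0 < p i) (hpsum : ∑ i, p i = 1)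
    (Φ : Matrix (Fin d) (Fin d) ℂ → Matrix (Fin d) (Fin d) ℂ)
    (hΦ : ∀ ρ, Φ ρ = ∑ i, (p i : ℂ) • (U i * ρ * (U i)ᴴ))
    (lam : ℂ) (hlam : ‖lam‖ = 1)
    (K : Matrix (Fin d) (Fin d) ℂ) (hK : Φ K = lam • K)
    (Y : Matrix (Fin d) (Fin d) ℂ) :
    (Kᴴ * (Φ Y - lam • Y)).trace = 0 := by
  classical
  set T : Matrix (Fin d) (Fin d) ℂ → Matrix (Fin d) (Fin d) ℂ :=
    fun X => ∑ i, (p i : ℂ) • ((U i)ᴴ * X * U i) with hT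
  have hU2 : ∀ i, U i * (U i)ᴴ = 1 := fun i => by
    simpa [Matrix.star_eq_conjTranspose] using (hU i).2
  have key : ∀ (A B V : Matrix (Fin d) (Fin d) ℂ),
      ((Vᴴ * A * V)ᴴ * B).trace = (Aᴴ * (V * B * Vᴴ)).trace := by
    intro A B V
    rw [conjTranspose_mul, conjTranspose_mul, conjTranspose_conjTranspose]
    rw [mul_assoc, Matrix.trace_mul_comm]
    simp only [mul_assoc]
  have hadj : ∀ A B : Matrix (Fin d) (Fin d) ℂ,
      ((T A)ᴴ * B).trace = (Aᴴ * Φ B).trace := by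
    intro A B
    rw [hΦ, Matrix.mul_sum, Matrix.trace_sum]
    simp only [hT, conjTranspose_sum, conjTranspose_smul, Matrix.sum_mul,
      Matrix.trace_sum, Matrix.smul_mul, Matrix.mul_smul, Matrix.trace_smul,
      Complex.star_def, Complex.conj_ofReal]
    exact Finset.sum_congr rfl fun i _ => by rw [key]
  have hmid : ∀ i (X : Matrix (Fin d) (Fin d) ℂ),
      U i * ((U i)ᴴ * X * U i) * (U i)ᴴ = X := by
    intro i X
    simp only [mul_assoc, hU2 i, mul_one]
    rw [← mul_assoc, hU2 i, one_mul]
  have hnormU : ∀ i (X : Matrix (Fin d) (Fin d) ℂ),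
      ‖g ((U i)ᴴ * X * U i)‖ = ‖g X‖ := by
    intro i X
    have h2 : (‖g ((U i)ᴴ * X * U i)‖ : ℂ) ^ 2 = (‖g X‖ : ℂ) ^ 2 := by
      rw [norm_g_sq, norm_g_sq, key X ((U i)ᴴ * X * U i) (U i), hmid i X]
    have h3 : ‖g ((U i)ᴴ * X * U i)‖ ^ 2 = ‖g X‖ ^ 2 := by
      exact_mod_cast h2
    nlinarith [norm_nonneg (g ((U i)ᴴ * X * U i)), norm_nonneg (g X)]
  have hcontr : ‖g (T K)‖ ≤ ‖g K‖ := by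
    have hgt : g (T K) = ∑ i, (p i : ℂ) • g ((U i)ᴴ * K * U i) := by
      simp [hT, map_sum, LinearMap.map_smul]
    rw [hgt]
    calc ‖∑ i, (p i : ℂ) • g ((U i)ᴴ * K * U i)‖
        ≤ ∑ i, ‖(p i : ℂ) • g ((U i)ᴴ * K * U i)‖ := norm_sum_le _ _
      _ = ∑ i, p i * ‖g K‖ := by
          refine Finset.sum_congr rfl fun i _ => ?_
          rw [norm_smul, hnormU i K]
          simp [Complex.norm_real, Real.norm_eq_abs, abs_of_pos (hp i)]
      _ = ‖g K‖ := by rw [← Finset.sum_mul, hpsum, one_mul]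
  have hinner : (inner ℂ (g (T K)) (g K) : ℂ) = lam * (‖g K‖ : ℂ) ^ 2 := by
    rw [inner_g, hadj K K, hK, Matrix.mul_smul, trace_smul, smul_eq_mul, ← norm_g_sq]
  have hconj : (starRingEnd ℂ lam) * lam = 1 := by
    rw [mul_comm, Complex.mul_conj]
    rw [Complex.normSq_eq_norm_sq, hlam]
    norm_num
  have hTK : T K = (starRingEnd ℂ lam) • K := by
    apply g_inj
    rw [LinearMap.map_smul]
    have hre : RCLike.re (inner ℂ (g (T K)) ((starRingEnd ℂ lam) • g K) : ℂ) = ‖g K‖ ^ 2 := by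
      rw [inner_smul_right, hinner, ← mul_assoc, hconj, one_mul]
      simp [← Complex.ofReal_pow]
    have hnsmul : ‖(starRingEnd ℂ lam) • g K‖ = ‖g K‖ := by
      rw [norm_smul]
      simp [Complex.norm_conj, hlam]
    have hsq : ‖g (T K) - (starRingEnd ℂ lam) • g K‖ ^ 2 ≤ 0 := by
      rw [@norm_sub_sq ℂ _ _ _ _ (g (T K)) ((starRingEnd ℂ lam) • g K), hre, hnsmul]
      nlinarith [norm_nonneg (g (T K)), norm_nonneg (g K)]
    have h0 : ‖g (T K) - (starRingEnd ℂ lam) • g K‖ = 0 := by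
      nlinarith [norm_nonneg (g (T K) - (starRingEnd ℂ lam) • g K)]
    rw [← sub_eq_zero]
    exact norm_eq_zero.mp h0
  have h1 : (Kᴴ * Φ Y).trace = lam * (Kᴴ * Y).trace := by
    rw [← hadj K Y, hTK]
    rw [conjTranspose_smul, Matrix.smul_mul, trace_smul]
    simp [smul_eq_mul]
  rw [Matrix.mul_sub, trace_sub, Matrix.mul_smul, trace_smul, h1, smul_eq_mul, sub_self]
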